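/- Let A be a commutative Noetherian ring, let nil(A) denote its nilradical, and let Frac(A) denote its total ring of fractions, i.e. the localization of A at its multiplicative set of nonzerodivisors. Every nonzerodivisor of A maps to a nonzerodivisor of A_red = A/nil(A), so there is a canonical (always injective) A-algebra homomorphism φ from the reduction Frac(A)/nil(Frac(A)) of the total ring of fractions of A to the total ring of fractions Frac(A_red) of A_red. Then φ is an isomorphism if and only if A has no embedded primes, i.e. if and only if every associated prime of A (as a module over itself) is a minimal prime of A. -/

import Mathlib

/-- Every nonzerodivisor of `A` maps to a nonzerodivisor of `A_red = A / nil(A)`. -/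
theorem Ideal.Quotient.mk_nilradical_mem_nonZeroDivisors
    {A : Type*} [CommRing A] {s : A} (hs : s ∈ nonZeroDivisors A) :
    Ideal.Quotient.mk (nilradical A) s ∈ nonZeroDivisors (A ⧸ nilradical A) := by
  rw [mem_nonZeroDivisors_iff_right]
  intro z hz
  obtain ⟨a, rfl⟩ := Ideal.Quotient.mk_surjective z
  rw [← _root_.map_mul (Ideal.Quotient.mk (nilradical A)), Ideal.Quotient.eq_zero_iff_mem, mem_nilradical] at hz
  obtain ⟨n, hn⟩ := hz
  rw [mul_pow] at hn
  have ha : a ^ n = 0 := (mem_nonZeroDivisors_iff_right.mp (pow_mem hs n)) _ hn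
  rw [Ideal.Quotient.eq_zero_iff_mem, mem_nilradical]
  exact ⟨n, ha⟩

/-- The canonical ring homomorphism from the total ring of fractions `Frac(A)` of `A` to the
total ring of fractions `Frac(A_red)` of the reduction `A_red = A / nil(A)`, obtained from the
universal property of localization, using that nonzerodivisors of `A` map to nonzerodivisors
(hence to units of `Frac(A_red)`) of `A_red`. -/
noncomputable def fractionRingToFractionRingRed (A : Type*) [CommRing A] :
    FractionRing A →+* FractionRing (A ⧸ nilradical A) :=
  IsLocalization.lift (M := nonZeroDivisors A) (S := FractionRing A)
    (g := (algebraMap (A ⧸ nilradical A) (FractionRing (A ⧸ nilradical A))).comp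
      (Ideal.Quotient.mk (nilradical A)))
    (fun s => IsLocalization.map_units (FractionRing (A ⧸ nilradical A))
      ⟨Ideal.Quotient.mk (nilradical A) s.1,
        Ideal.Quotient.mk_nilradical_mem_nonZeroDivisors s.2⟩)

/-- `A ⧸ nilradical A` is reduced. -/
instance (A : Type*) [CommRing A] : IsReduced (A ⧸ nilradical A) := by
  rw [← Ideal.isRadical_iff_quotient_reduced]
  exact Ideal.radical_isRadical (⊥ : Ideal A)

/-- The canonical (always injective) homomorphism `φ` from the reduction
`Frac(A)/nil(Frac(A))` of the total ring of fractions of `A` to the total ring of fractions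
`Frac(A_red)` of `A_red = A/nil(A)`; it is induced by `fractionRingToFractionRingRed`, which
kills the nilradical because its target is reduced. -/
noncomputable def fracRedToRedFrac (A : Type*) [CommRing A] :
    (FractionRing A ⧸ nilradical (FractionRing A)) →+* FractionRing (A ⧸ nilradical A) :=
  Ideal.Quotient.lift (nilradical (FractionRing A)) (fractionRingToFractionRingRed A)
    (fun x hx => by
      rw [mem_nilradical] at hx
      exact (hx.map (fractionRingToFractionRingRed A)).eq_zero)

section Helpers

variable {A : Type*} [CommRing A]

lemma phi_mk' (a : A) (s : nonZeroDivisors A) :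
    fractionRingToFractionRingRed A (IsLocalization.mk' (FractionRing A) a s) =
      IsLocalization.mk' (FractionRing (A ⧸ nilradical A))
        (Ideal.Quotient.mk (nilradical A) a)
        ⟨Ideal.Quotient.mk (nilradical A) s.1,
          Ideal.Quotient.mk_nilradical_mem_nonZeroDivisors s.2⟩ := by
  rw [IsLocalization.eq_mk'_iff_mul_eq]
  have h1 : ∀ b : A, fractionRingToFractionRingRed A (algebraMap A (FractionRing A) b) =
      algebraMap _ _ (Ideal.Quotient.mk (nilradical A) b) := fun b =>
    IsLocalization.lift_eq _ b
  show _ * algebraMap _ _ (Ideal.Quotient.mk (nilradical A) s.1) = _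
  rw [← h1, ← h1, ← map_mul, IsLocalization.mk'_spec]

lemma mk_notMem_nonZeroDivisors_of_mem_minimal {q : Ideal A} (hq : q ∈ minimalPrimes A)
    {t : A} (ht : t ∈ q) :
    Ideal.Quotient.mk (nilradical A) t ∉ nonZeroDivisors (A ⧸ nilradical A) := by
  haveI : q.IsPrime := hq.1.1
  have hnu : ¬ IsUnit (algebraMap A (Localization q.primeCompl) t) := fun h =>
    ((IsLocalization.AtPrime.isUnit_to_map_iff (Localization q.primeCompl) q t).mp h) ht
  have hnil : IsNilpotent (algebraMap A (Localization q.primeCompl) t) :=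
    (haveI := Ring.KrullDimLE.of_isLocalization q hq (Localization q.primeCompl);
      Ring.KrullDimLE.isNilpotent_iff_mem_nonunits).mpr hnu
  obtain ⟨n, hn⟩ := hnil
  rw [← map_pow, IsLocalization.map_eq_zero_iff q.primeCompl] at hn
  obtain ⟨c, hc⟩ := hn
  intro hT
  have hc0 : Ideal.Quotient.mk (nilradical A) (c : A) ≠ 0 := by
    rw [Ne, Ideal.Quotient.eq_zero_iff_mem]
    exact fun h => c.2 (nilradical_le_prime q h)
  refine hc0 (mem_nonZeroDivisors_iff_right.mp (pow_mem hT n) _ ?_)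
  rw [← map_pow, ← map_mul, hc, map_zero]

lemma mk_mem_nonZeroDivisors_of_notMem_minimal {t : A}
    (ht : ∀ q ∈ minimalPrimes A, t ∉ q) :
    Ideal.Quotient.mk (nilradical A) t ∈ nonZeroDivisors (A ⧸ nilradical A) := by
  rw [mem_nonZeroDivisors_iff_right]
  intro z hz
  obtain ⟨c, rfl⟩ := Ideal.Quotient.mk_surjective z
  rw [← map_mul, Ideal.Quotient.eq_zero_iff_mem] at hz
  rw [Ideal.Quotient.eq_zero_iff_mem]
  have hnr : nilradical A = sInf (minimalPrimes A) := by
    rw [minimalPrimes, Ideal.sInf_minimalPrimes, nilradical, Submodule.zero_eq_bot]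
  rw [hnr, Ideal.mem_sInf]
  intro q hq
  haveI : q.IsPrime := hq.1.1
  have hct : c * t ∈ q := by
    have : nilradical A ≤ q := nilradical_le_prime q
    exact this hz
  exact ((Ideal.IsPrime.mem_or_mem ‹q.IsPrime› hct).resolve_right (ht q hq))

end Helpers

set_option synthInstance.maxHeartbeats 1000000 in
lemma fracRedToRedFrac_injective (A : Type*) [CommRing A] :
    Function.Injective (fracRedToRedFrac A) := by
  rw [injective_iff_map_eq_zero]
  intro y hy
  obtain ⟨x, rfl⟩ := Ideal.Quotient.mk_surjective y
  obtain ⟨⟨a, s⟩, rfl⟩ := IsLocalization.mk'_surjective (nonZeroDivisors A) x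
  rw [fracRedToRedFrac, Ideal.Quotient.lift_mk, phi_mk', IsLocalization.mk'_eq_zero_iff] at hy
  obtain ⟨m, hm⟩ := hy
  have ha : Ideal.Quotient.mk (nilradical A) a = 0 :=
    mem_nonZeroDivisors_iff_right.mp m.2 _ (by rw [mul_comm]; exact hm)
  rw [Ideal.Quotient.eq_zero_iff_mem, mem_nilradical] at ha
  obtain ⟨k, hk⟩ := ha
  rw [Ideal.Quotient.eq_zero_iff_mem, mem_nilradical]
  refine ⟨k, ?_⟩
  rw [← IsLocalization.mk'_pow, hk, IsLocalization.mk'_zero]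


/-- **Lemma (Brussel–Tengan).**  Let `A` be a commutative Noetherian ring.  The canonical
homomorphism `φ : Frac(A)/nil(Frac(A)) → Frac(A_red)` is an isomorphism if and only if `A`
has no embedded primes, i.e. every associated prime of `A` (as a module over itself) is a
minimal prime of `A`. -/
theorem fracRed_eq_redFrac_iff_no_embedded_primes
    (A : Type*) [CommRing A] [IsNoetherianRing A] :
    Function.Bijective (fracRedToRedFrac A) ↔
      ∀ p ∈ associatedPrimes A A, p ∈ minimalPrimes A := by
  constructor
  · intro hbij p hp
    obtain ⟨hpprime, x, hx⟩ := isAssociatedPrime_iff.mp hp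
    have hx0 : x ≠ 0 := by
      rintro rfl
      replace hx : p = ⊤ := by rw [hx]; ext r; simp [Submodule.mem_colon_singleton]
      exact hpprime.ne_top hx
    by_contra hpmin
    have hnle : ∀ q ∈ minimalPrimes A, ¬ p ≤ q := by
      intro q hq hle
      exact hpmin (le_antisymm hle (hq.2 ⟨hpprime, bot_le⟩ hle) ▸ hq)
    have hfin := minimalPrimes.finite_of_isNoetherianRing A
    have hiff := Ideal.subset_union_prime (s := hfin.toFinset) (f := id)
      (⊤ : Ideal A) (⊤ : Ideal A)
      (fun i hi _ _ => ((hfin.mem_toFinset.mp hi).1.1)) (I := p)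
    have hnsub := hiff.not.mpr (by
      rintro ⟨i, hi, hle⟩
      exact hnle i (hfin.mem_toFinset.mp hi) hle)
    obtain ⟨t, htp, htnot⟩ := Set.not_subset.mp hnsub
    have htq : ∀ q ∈ minimalPrimes A, t ∉ q := by
      intro q hq htq
      exact htnot (Set.mem_biUnion (by simpa using hq) htq)
    have htred := mk_mem_nonZeroDivisors_of_notMem_minimal htq
    have hu : IsUnit (algebraMap (A ⧸ nilradical A) (FractionRing (A ⧸ nilradical A))
        (Ideal.Quotient.mk (nilradical A) t)) :=
      IsLocalization.map_units _ ⟨Ideal.Quotient.mk (nilradical A) t, htred⟩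
    obtain ⟨y, hy⟩ := hbij.2 (↑hu.unit⁻¹)
    obtain ⟨w, rfl⟩ := Ideal.Quotient.mk_surjective y
    obtain ⟨⟨a, s⟩, rfl⟩ := IsLocalization.mk'_surjective (nonZeroDivisors A) w
    rw [fracRedToRedFrac, Ideal.Quotient.lift_mk, phi_mk'] at hy
    have h1 : IsLocalization.mk' (FractionRing (A ⧸ nilradical A))
        (Ideal.Quotient.mk (nilradical A) a)
        ⟨Ideal.Quotient.mk (nilradical A) s.1,
          Ideal.Quotient.mk_nilradical_mem_nonZeroDivisors s.2⟩ *
        algebraMap (A ⧸ nilradical A) (FractionRing (A ⧸ nilradical A))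
          (Ideal.Quotient.mk (nilradical A) t) = 1 := by
      rw [hy]
      exact hu.val_inv_mul
    have hspec := IsLocalization.mk'_spec (FractionRing (A ⧸ nilradical A))
      (Ideal.Quotient.mk (nilradical A) a)
      (⟨Ideal.Quotient.mk (nilradical A) s.1,
        Ideal.Quotient.mk_nilradical_mem_nonZeroDivisors s.2⟩ : nonZeroDivisors (A ⧸ nilradical A))
    have h2 : algebraMap (A ⧸ nilradical A) (FractionRing (A ⧸ nilradical A))
        (Ideal.Quotient.mk (nilradical A) (a * t)) =
        algebraMap (A ⧸ nilradical A) (FractionRing (A ⧸ nilradical A))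
          (Ideal.Quotient.mk (nilradical A) s.1) := by
      rw [map_mul, map_mul, ← hspec, mul_right_comm, h1, one_mul]
    have h3 : Ideal.Quotient.mk (nilradical A) (a * t) = Ideal.Quotient.mk (nilradical A) s.1 :=
      IsFractionRing.injective (A ⧸ nilradical A) (FractionRing (A ⧸ nilradical A)) h2
    have h4 : (s : A) - a * t ∈ nilradical A := by
      rw [← Ideal.Quotient.eq_zero_iff_mem, map_sub, h3, sub_self]
    obtain ⟨k, hk⟩ := mem_nilradical.mp h4
    have htx : t * x = 0 := by
      have htp' : t ∈ p := htp
      rw [hx] at htp'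
      rwa [Submodule.mem_colon_singleton, Submodule.mem_bot, smul_eq_mul] at htp'
    have key : ∀ m : ℕ, (s : A) ^ m * x = ((s : A) - a * t) ^ m * x := by
      intro m
      induction m with
      | zero => simp
      | succ m ih =>
        have hsx : (s : A) * x = ((s : A) - a * t) * x := by
          rw [sub_mul, mul_assoc, htx, mul_zero, sub_zero]
        calc (s : A) ^ (m + 1) * x = (s : A) ^ m * ((s : A) * x) := by ring
          _ = (s : A) ^ m * (((s : A) - a * t) * x) := by rw [hsx]
          _ = ((s : A) - a * t) * ((s : A) ^ m * x) := by ring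
          _ = ((s : A) - a * t) * (((s : A) - a * t) ^ m * x) := by rw [ih]
          _ = ((s : A) - a * t) ^ (m + 1) * x := by ring
    have hzero : (s : A) ^ k * x = 0 := by rw [key k, hk, zero_mul]
    exact hx0 (mem_nonZeroDivisors_iff_right.mp (pow_mem s.2 k) x (by rwa [mul_comm] at hzero))
  · intro hmin
    refine ⟨fracRedToRedFrac_injective A, ?_⟩
    intro z
    obtain ⟨⟨b, u⟩, rfl⟩ := IsLocalization.mk'_surjective (nonZeroDivisors (A ⧸ nilradical A)) z
    obtain ⟨a, ha⟩ := Ideal.Quotient.mk_surjective b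
    obtain ⟨t, ht⟩ := Ideal.Quotient.mk_surjective (u : A ⧸ nilradical A)
    have htS : t ∈ nonZeroDivisors A := by
      rw [mem_nonZeroDivisors_iff_right]
      by_contra h
      push_neg at h
      obtain ⟨c, hc, hc0⟩ := h
      have htzd : t ∈ ⋃ p ∈ associatedPrimes A A, (p : Set A) := by
        rw [biUnion_associatedPrimes_eq_zero_divisors]
        exact ⟨c, hc0, by rw [smul_eq_mul, mul_comm]; exact hc⟩
      obtain ⟨p, hp, htp⟩ := Set.mem_iUnion₂.mp htzd
      have := mk_notMem_nonZeroDivisors_of_mem_minimal (hmin p hp) htp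
      rw [ht] at this
      exact this u.2
    refine ⟨Ideal.Quotient.mk _ (IsLocalization.mk' (FractionRing A) a ⟨t, htS⟩), ?_⟩
    rw [fracRedToRedFrac, Ideal.Quotient.lift_mk, phi_mk', ha]
    congr 1
    exact Subtype.ext ht
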